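/- arXiv:1511.07268 — 3 statements merged into one kernel-verified Lean document; each statement's English description precedes it below -/
import Mathlib

section
/- For all integers 0 ≤ i < j < k ≤ n, the toric map f̄ satisfies: if i > 0 then f̄(σ(i,j,k)) = σ(i-1, j-1, k-1), and if i = 0 then f̄(σ(0,j,k)) = σ(j-1, k-1, n). -/
/-- Auxiliary function: the action of the block transposition with cut points
`(i,j,k)` on `{1,…,n}`, written 1-based. -/
def btFun (i j k t : ℕ) : ℕ :=
  if t ≤ i ∨ k < t then t
  else if t ≤ k - j + i then t + j - i
  else t + j - k

theorem btFun_lb {i j k t : ℕ} (h1 : 1 ≤ t) : 1 ≤ btFun i j k t := by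
  unfold btFun; split_ifs <;> omega

theorem btFun_ub {i j k t n : ℕ} (ht : t ≤ n) (hjk : j ≤ k) (hkn : k ≤ n) :
    btFun i j k t ≤ n := by
  unfold btFun; split_ifs <;> omega

theorem btFun_inv {i j k : ℕ} (hij : i < j) (hjk : j < k) (t : ℕ) :
    btFun i (k - j + i) k (btFun i j k t) = t := by
  unfold btFun; split_ifs <;> omega

theorem btFun_inv' {i j k : ℕ} (hij : i < j) (hjk : j < k) (t : ℕ) :
    btFun i j k (btFun i (k - j + i) k t) = t := by
  have h := btFun_inv (i := i) (j := k - j + i) (k := k) (by omega) (by omega) t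
  have e : k - (k - j + i) + i = j := by omega
  rwa [e] at h

/-- The block transposition `σ(i,j,k)` as a permutation of `Fin n`,
where `t : Fin n` encodes the element `t.val + 1` of `{1,…,n}`. -/
def blockT (n i j k : ℕ) (hij : i < j) (hjk : j < k) (hkn : k ≤ n) :
    Equiv.Perm (Fin n) where
  toFun t := ⟨btFun i j k (t.1 + 1) - 1, by
    have h0 := t.isLt
    have h1 := btFun_lb (i := i) (j := j) (k := k) (t := t.1 + 1) (by omega)
    have h2 := btFun_ub (i := i) (j := j) (k := k) (t := t.1 + 1) (n := n)
      (by omega) (by omega) hkn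
    omega⟩
  invFun t := ⟨btFun i (k - j + i) k (t.1 + 1) - 1, by
    have h0 := t.isLt
    have h1 := btFun_lb (i := i) (j := k - j + i) (k := k) (t := t.1 + 1) (by omega)
    have h2 := btFun_ub (i := i) (j := k - j + i) (k := k) (t := t.1 + 1) (n := n)
      (by omega) (by omega) hkn
    omega⟩
  left_inv t := by
    have h1 := btFun_lb (i := i) (j := j) (k := k) (t := t.1 + 1) (by omega)
    have h2 := btFun_inv hij hjk (t.1 + 1)
    apply Fin.ext
    simp only
    have h3 : btFun i j k (t.1 + 1) - 1 + 1 = btFun i j k (t.1 + 1) := by omega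
    rw [h3, h2]
    omega
  right_inv t := by
    have h1 := btFun_lb (i := i) (j := k - j + i) (k := k) (t := t.1 + 1) (by omega)
    have h2 := btFun_inv' hij hjk (t.1 + 1)
    apply Fin.ext
    simp only
    have h3 : btFun i (k - j + i) k (t.1 + 1) - 1 + 1 = btFun i (k - j + i) k (t.1 + 1) := by
      omega
    rw [h3, h2]
    omega

/-- `T_n`: the set of all block transpositions on `{1,…,n}`. -/
def blockTranspositions (n : ℕ) : Set (Equiv.Perm (Fin n)) :=
  {π | ∃ (i j k : ℕ) (hij : i < j) (hjk : j < k) (hkn : k ≤ n),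
      blockT n i j k hij hjk hkn = π}

theorem blockT_inv {n i j k : ℕ} (hij : i < j) (hjk : j < k) (hkn : k ≤ n) :
    (blockT n i j k hij hjk hkn)⁻¹
      = blockT n i (k - j + i) k (by omega) (by omega) hkn :=
  Equiv.ext fun _ => rfl

theorem blockTranspositions_inv_mem {n : ℕ} {π : Equiv.Perm (Fin n)}
    (h : π ∈ blockTranspositions n) : π⁻¹ ∈ blockTranspositions n := by
  obtain ⟨i, j, k, hij, hjk, hkn, rfl⟩ := h
  exact ⟨i, k - j + i, k, by omega, by omega, hkn, (blockT_inv hij hjk hkn).symm⟩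

/-- The Cayley graph `Cay(Sym_n, T_n)`. -/
def cayleyT (n : ℕ) : SimpleGraph (Equiv.Perm (Fin n)) where
  Adj π ρ := π ≠ ρ ∧ π⁻¹ * ρ ∈ blockTranspositions n
  symm := ⟨by
    rintro π ρ ⟨hne, hmem⟩
    refine ⟨hne.symm, ?_⟩
    have h := blockTranspositions_inv_mem hmem
    rwa [mul_inv_rev, inv_inv] at h⟩
  loopless := ⟨fun π h => h.1 rfl⟩

def ext0 {n : ℕ} (π : Equiv.Perm (Fin n)) : Equiv.Perm (Fin (n + 1)) where
  toFun x := Fin.cases 0 (fun t => (π t).succ) x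
  invFun x := Fin.cases 0 (fun t => (π⁻¹ t).succ) x
  left_inv x := by
    cases x using Fin.cases with
    | zero => simp
    | succ t => simp
  right_inv x := by
    cases x using Fin.cases with
    | zero => simp
    | succ t => simp

theorem ext0_zero {n : ℕ} (π : Equiv.Perm (Fin n)) : ext0 π 0 = 0 := by
  simp [ext0]

open Fin.NatCast

theorem Equiv.Perm.inv_apply_self' {α : Type*} (f : Equiv.Perm α) (x : α) : f⁻¹ (f x) = x :=
  f.symm_apply_apply x

theorem Equiv.Perm.apply_inv_self' {α : Type*} (f : Equiv.Perm α) (x : α) : f (f⁻¹ x) = x :=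
  f.apply_symm_apply x

theorem finRotate_pow_apply {n : ℕ} (m : ℕ) (x : Fin (n + 1)) :
    ((finRotate (n + 1)) ^ m) x = x + (m : Fin (n + 1)) := by
  induction m with
  | zero => simp
  | succ m ih =>
      rw [pow_succ', Equiv.Perm.mul_apply, finRotate_apply, ih]
      push_cast
      first | abel | simp [Nat.cast_succ, add_assoc]

/-- The auxiliary permutation `α^(n+1-r) ∘ [0 π] ∘ α^(π⁻¹(r))` of `{0,1,…,n}`. -/
def toricAux (n r : ℕ) (π : Equiv.Perm (Fin n)) : Equiv.Perm (Fin (n + 1)) :=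
  (finRotate (n + 1)) ^ (n + 1 - r) * ext0 π *
    (finRotate (n + 1)) ^ (((ext0 π)⁻¹ (r : Fin (n + 1))) : ℕ)

theorem toricAux_apply_zero (n r : ℕ) (hr : r ≤ n) (π : Equiv.Perm (Fin n)) :
    toricAux n r π 0 = 0 := by
  unfold toricAux
  have h : r + (n + 1 - r) = n + 1 := by omega
  rw [Equiv.Perm.mul_apply, Equiv.Perm.mul_apply, finRotate_pow_apply,
    finRotate_pow_apply, zero_add, Fin.cast_val_eq_self,
    Equiv.Perm.apply_inv_self', ← Nat.cast_add, h, Fin.natCast_self]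

/-- Restriction of a permutation of `{0,1,…,n}` fixing `0` to a permutation of `{1,…,n}`. -/
def unext0 {n : ℕ} (τ : Equiv.Perm (Fin (n + 1))) (h : τ 0 = 0) : Equiv.Perm (Fin n) where
  toFun t := (τ t.succ).pred (by
    intro hc
    exact Fin.succ_ne_zero t (τ.injective (hc.trans h.symm)))
  invFun t := (τ⁻¹ t.succ).pred (by
    intro hc
    have h' : τ⁻¹ 0 = 0 := by
      conv_lhs => rw [← h]
      exact Equiv.Perm.inv_apply_self' τ 0
    exact Fin.succ_ne_zero t (τ⁻¹.injective (hc.trans h'.symm)))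
  left_inv t := by
    apply Fin.succ_injective
    rw [Fin.succ_pred, Fin.succ_pred, Equiv.Perm.inv_apply_self']
  right_inv t := by
    apply Fin.succ_injective
    rw [Fin.succ_pred, Fin.succ_pred, Equiv.Perm.apply_inv_self']

/-- The toric map `f̄_r` on `Sym_n`. -/
def toricMap (n r : ℕ) (hr : r ≤ n) (π : Equiv.Perm (Fin n)) : Equiv.Perm (Fin n) :=
  unext0 (toricAux n r π) (toricAux_apply_zero n r hr π)

theorem ext0_succ {n : ℕ} (π : Equiv.Perm (Fin n)) (a : Fin n) :
    ext0 π a.succ = (π a).succ := by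
  simp [ext0]

theorem ext0_val {n : ℕ} (π : Equiv.Perm (Fin n)) (x : Fin (n+1)) (hx : x.val ≠ 0) :
    (ext0 π x).val = (π ⟨x.val - 1, by omega⟩).val + 1 := by
  have hx' : x = Fin.succ ⟨x.val - 1, by omega⟩ := by
    apply Fin.ext; simp [Fin.val_succ]; omega
  conv_lhs => rw [hx', ext0_succ]
  rfl

theorem ext0_inv_one {n : ℕ} (hn : 1 ≤ n) (π : Equiv.Perm (Fin n)) :
    (((ext0 π)⁻¹ (((1:ℕ)) : Fin (n+1))) : ℕ) = (π⁻¹ ⟨0, hn⟩).val + 1 := by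
  have key : ∀ (a : Fin n) (h : (a.succ).val - 1 < n), (⟨(a.succ).val - 1, h⟩ : Fin n) = a :=
    fun a h => Fin.ext (by simp)
  have : (ext0 π) ((π⁻¹ ⟨0, hn⟩).succ) = ((1:ℕ) : Fin (n+1)) := by
    apply Fin.ext
    rw [ext0_succ, Fin.val_succ, Equiv.Perm.apply_inv_self',
      Fin.val_natCast, Nat.mod_eq_of_lt (by omega)]
  rw [← this, Equiv.Perm.inv_apply_self', Fin.val_succ]

theorem val_add_nat {n : ℕ} (m : ℕ) (x : Fin (n+1)) :
    (x + (m : Fin (n+1))).val = (x.val + m) % (n+1) := by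
  rw [Fin.add_def, Fin.val_natCast]; simp [Nat.add_mod]

theorem toricMap_val (n : ℕ) (hn : 1 ≤ n) (π : Equiv.Perm (Fin n)) (t : Fin n) :
    ((toricMap n 1 hn π t) : ℕ) = ((toricAux n 1 π t.succ) : ℕ) - 1 := rfl

theorem ext0_val' {n : ℕ} (π : Equiv.Perm (Fin n)) (x : Fin (n+1)) (s : ℕ)
    (hxs : x.val = s) (hs : s ≠ 0) (hlt : s - 1 < n) :
    (ext0 π x).val = (π ⟨s - 1, hlt⟩).val + 1 := by
  subst hxs
  exact ext0_val π x hs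

theorem toricAux_one_val (n : ℕ) (hn : 1 ≤ n) (π : Equiv.Perm (Fin n)) (x : Fin (n+1)) :
    ((toricAux n 1 π x) : ℕ) =
      ((ext0 π (x + ((((π⁻¹ ⟨0, hn⟩) : ℕ) + 1 : ℕ) : Fin (n+1)))).val + n) % (n+1) := by
  unfold toricAux
  rw [Equiv.Perm.mul_apply, Equiv.Perm.mul_apply, finRotate_pow_apply,
    finRotate_pow_apply, ext0_inv_one hn, val_add_nat]
  congr 2

theorem toricMap_val_zero (n : ℕ) (hn : 1 ≤ n) (π : Equiv.Perm (Fin n)) (t : Fin n)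
    (h : (t.val + 1 + (((π⁻¹ ⟨0, hn⟩) : ℕ) + 1)) % (n+1) = 0) :
    ((toricMap n 1 hn π t) : ℕ) = n - 1 := by
  rw [toricMap_val, toricAux_one_val n hn]
  have hx : (t.succ + ((((π⁻¹ ⟨0, hn⟩) : ℕ) + 1 : ℕ) : Fin (n+1))) = 0 := by
    apply Fin.ext
    rw [val_add_nat, Fin.val_succ]
    exact h
  rw [hx, ext0_zero π]
  simp [Nat.mod_eq_of_lt (show 0 + n < n + 1 by omega)]

theorem toricMap_val_ne (n : ℕ) (hn : 1 ≤ n) (π : Equiv.Perm (Fin n)) (t : Fin n)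
    (s : ℕ) (hs : s = (t.val + 1 + (((π⁻¹ ⟨0, hn⟩) : ℕ) + 1)) % (n+1)) (h : s ≠ 0)
    (hlt : s - 1 < n) :
    ((toricMap n 1 hn π t) : ℕ) = (π ⟨s - 1, hlt⟩).val - 1 := by
  rw [toricMap_val, toricAux_one_val n hn]
  have hx : (t.succ + ((((π⁻¹ ⟨0, hn⟩) : ℕ) + 1 : ℕ) : Fin (n+1))).val = s := by
    rw [val_add_nat, Fin.val_succ, hs]
  rw [ext0_val' π _ s hx h hlt]
  have ha := (π ⟨s - 1, hlt⟩).isLt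
  set a := (π ⟨s - 1, hlt⟩).val with hav
  have e : a + 1 + n = a + (n + 1) := by omega
  rw [e, Nat.add_mod_right, Nat.mod_eq_of_lt (by omega)]

theorem blockT_val (n i j k : ℕ) (hij : i < j) (hjk : j < k) (hkn : k ≤ n) (x : Fin n) :
    ((blockT n i j k hij hjk hkn x) : ℕ) = btFun i j k (x.val + 1) - 1 := rfl

theorem blockT_inv_val (n i j k : ℕ) (hij : i < j) (hjk : j < k) (hkn : k ≤ n)
    (x : Fin n) :
    (((blockT n i j k hij hjk hkn)⁻¹ x) : ℕ) = btFun i (k - j + i) k (x.val + 1) - 1 := rfl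

/-- For all `0 ≤ i < j < k ≤ n`: if `i > 0` then
`f̄(σ(i,j,k)) = σ(i-1,j-1,k-1)`, and if `i = 0` then `f̄(σ(0,j,k)) = σ(j-1,k-1,n)`. -/
theorem stmt_5 (n i j k : ℕ) (hn : 1 ≤ n) (hij : i < j) (hjk : j < k) (hkn : k ≤ n) :
    (∀ hi : 0 < i, toricMap n 1 hn (blockT n i j k hij hjk hkn)
        = blockT n (i - 1) (j - 1) (k - 1) (by omega) (by omega) (by omega)) ∧
    (∀ _ : i = 0, toricMap n 1 hn (blockT n i j k hij hjk hkn)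
        = blockT n (j - 1) (k - 1) n (by omega) (by omega) le_rfl) := by
  have hminv : (((blockT n i j k hij hjk hkn)⁻¹ ⟨0, hn⟩) : ℕ)
      = btFun i (k - j + i) k 1 - 1 := by
    rw [blockT_inv_val]
  have hM1 : 1 ≤ btFun i (k - j + i) k 1 := btFun_lb (by omega)
  have hMn : btFun i (k - j + i) k 1 ≤ n := btFun_ub (by omega) (by omega) hkn
  have key : ∀ (t : Fin n),
      (t.val + 1 + ((((blockT n i j k hij hjk hkn)⁻¹ ⟨0, hn⟩) : ℕ) + 1)) % (n + 1)
        = (t.val + 1 + btFun i (k - j + i) k 1) % (n + 1) := by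
    intro t; rw [hminv]; congr 1; omega
  have hmod : ∀ (t : Fin n),
      (t.val + 1 + btFun i (k - j + i) k 1) % (n + 1)
          = t.val + 1 + btFun i (k - j + i) k 1 ∨
      (t.val + 1 + btFun i (k - j + i) k 1) % (n + 1) + (n + 1)
          = t.val + 1 + btFun i (k - j + i) k 1 := by
    intro t
    rcases Nat.lt_or_ge (t.val + 1 + btFun i (k - j + i) k 1) (n + 1) with hc | hc
    · left; exact Nat.mod_eq_of_lt hc
    · right
      have ht := t.isLt
      rw [Nat.mod_eq_sub_mod hc, Nat.mod_eq_of_lt (by omega)]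
      omega
  constructor
  · intro hi
    apply Equiv.ext; intro t; apply Fin.ext
    have ht := t.isLt
    have hM : btFun i (k - j + i) k 1 = 1 := by
      unfold btFun; split_ifs <;> omega
    rw [blockT_val]
    by_cases hz : (t.val + 1 + ((((blockT n i j k hij hjk hkn)⁻¹ ⟨0, hn⟩) : ℕ) + 1)) % (n + 1) = 0
    · rw [toricMap_val_zero n hn _ t hz]
      have hz' := hz; rw [key t] at hz'
      have hm := hmod t
      rw [hM] at hz' hm
      unfold btFun
      split_ifs <;> omega
    · have hlt : (t.val + 1 + ((((blockT n i j k hij hjk hkn)⁻¹ ⟨0, hn⟩) : ℕ) + 1)) % (n + 1) - 1 < n := by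
        have := Nat.mod_lt (t.val + 1 + ((((blockT n i j k hij hjk hkn)⁻¹ ⟨0, hn⟩) : ℕ) + 1)) (y := n + 1) (by omega)
        omega
      rw [toricMap_val_ne n hn _ t _ rfl hz hlt, blockT_val]
      simp only []
      have hz' := hz; rw [key t] at hz'
      have hm := hmod t
      rw [key t] at hlt ⊢
      rw [hM] at hz' hm hlt ⊢
      unfold btFun
      split_ifs <;> omega
  · intro hi
    subst hi
    apply Equiv.ext; intro t; apply Fin.ext
    have ht := t.isLt
    have hM : btFun 0 (k - j + 0) k 1 = k - j + 1 := by
      unfold btFun; split_ifs <;> omega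
    rw [blockT_val]
    by_cases hz : (t.val + 1 + ((((blockT n 0 j k hij hjk hkn)⁻¹ ⟨0, hn⟩) : ℕ) + 1)) % (n + 1) = 0
    · rw [toricMap_val_zero n hn _ t hz]
      have hz' := hz; rw [key t] at hz'
      have hm := hmod t
      rw [hM] at hz' hm
      unfold btFun
      split_ifs <;> omega
    · have hlt : (t.val + 1 + ((((blockT n 0 j k hij hjk hkn)⁻¹ ⟨0, hn⟩) : ℕ) + 1)) % (n + 1) - 1 < n := by
        have := Nat.mod_lt (t.val + 1 + ((((blockT n 0 j k hij hjk hkn)⁻¹ ⟨0, hn⟩) : ℕ) + 1)) (y := n + 1) (by omega)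
        omega
      rw [toricMap_val_ne n hn _ t _ rfl hz hlt, blockT_val]
      simp only []
      have hz' := hz; rw [key t] at hz'
      have hm := hmod t
      rw [key t] at hlt ⊢
      rw [hM] at hz' hm hlt ⊢
      unfold btFun
      split_ifs <;> omega
end

section
/- Let n ≥ 4. Every clique of the block transposition graph Γ that contains at least two distinct elements of B is contained in B; consequently, B is the unique maximal clique of Γ of size n-1 containing an edge with both endpoints in B. -/
/-- `B`: the set of block transpositions `σ(0,j,n)`, `1 ≤ j ≤ n-1`. -/
def Bset (n : ℕ) : Set (Equiv.Perm (Fin n)) :=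
  {π | ∃ (j : ℕ) (h1 : 0 < j) (h2 : j < n), blockT n 0 j n h1 h2 le_rfl = π}

/-- `S^∆`: the block transpositions `σ(i,j,k)` with `i ≠ 0` and `k ≠ n`. -/
def Sset (n : ℕ) : Set (Equiv.Perm (Fin n)) :=
  {π | ∃ (i j k : ℕ) (hij : i < j) (hjk : j < k) (hkn : k ≤ n),
      i ≠ 0 ∧ k ≠ n ∧ blockT n i j k hij hjk hkn = π}

/-- `L`: the block transpositions `σ(0,j,k)` with `k ≠ n`. -/
def Lset (n : ℕ) : Set (Equiv.Perm (Fin n)) :=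
  {π | ∃ (j k : ℕ) (hij : 0 < j) (hjk : j < k) (hkn : k ≤ n),
      k ≠ n ∧ blockT n 0 j k hij hjk hkn = π}

/-- `F`: the block transpositions `σ(i,j,n)` with `i ≠ 0`. -/
def Fset (n : ℕ) : Set (Equiv.Perm (Fin n)) :=
  {π | ∃ (i j : ℕ) (hij : i < j) (hjn : j < n),
      i ≠ 0 ∧ blockT n i j n hij hjn le_rfl = π}


/- ======================= auxiliary lemmas ======================= -/

theorem btFun_cases (i j k t : ℕ) :
    ((t ≤ i ∨ k < t) ∧ btFun i j k t = t) ∨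
    (¬(t ≤ i ∨ k < t) ∧ t ≤ k - j + i ∧ btFun i j k t = t + j - i) ∨
    (¬(t ≤ i ∨ k < t) ∧ ¬(t ≤ k - j + i) ∧ btFun i j k t = t + j - k) := by
  unfold btFun
  split_ifs with h1 h2
  · exact Or.inl ⟨h1, rfl⟩
  · exact Or.inr (Or.inl ⟨h1, h2, rfl⟩)
  · exact Or.inr (Or.inr ⟨h1, h2, rfl⟩)

/-- The key combinatorial lemma: if `σ(i',j',k') = σ(i,j,k) ∘ σ(0,c,n)` pointwise
(with `0 < c < n`), then either `σ(i,j,k)` is a rotation, or `c` is uniquely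
determined by `(i,j,k)`. -/
theorem main_lemma {n i j k i' j' k' c : ℕ}
    (hij : i < j) (hjk : j < k) (hkn : k ≤ n)
    (hij' : i' < j') (hjk' : j' < k') (hkn' : k' ≤ n)
    (hc1 : 0 < c) (hc2 : c < n)
    (H : ∀ t, 1 ≤ t → t ≤ n → btFun i' j' k' t = btFun i j k (btFun 0 c n t)) :
    (i = 0 ∧ k = n) ∨ (k = n ∧ 0 < i ∧ c = n + i - j) ∨ (i = 0 ∧ k < n ∧ c = k - j) := by
  rcases Nat.eq_zero_or_pos i with hi0 | hi0
  · rcases eq_or_lt_of_le hkn with hk | hk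
    · exact Or.inl ⟨hi0, hk⟩
    · -- CASE C : i = 0, k < n; show c = k - j
      -- point p = n - c, image n, value n
      have rb : btFun 0 c n (n - c) = n := by unfold btFun; split_ifs <;> omega
      have eb := H (n - c) (by omega) (by omega)
      rw [rb] at eb
      have bb : btFun i j k n = n := by unfold btFun; split_ifs <;> omega
      rw [bb] at eb
      have db := btFun_cases i' j' k' (n - c)
      have G2 : i' < n - c ∧ n - c ≤ k' - j' + i' ∧ j' = i' + c := by omega
      -- point q(k-j+1), image k-j+1, value 1
      have bf : btFun i j k (k - j + 1) = 1 := by unfold btFun; split_ifs <;> omega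
      rcases le_or_gt c (k - j) with hcm | hcm
      · have rf : btFun 0 c n (k - j + 1 - c) = k - j + 1 := by
          unfold btFun; split_ifs <;> omega
        have ef := H (k - j + 1 - c) (by omega) (by omega)
        rw [rf, bf] at ef
        have df := btFun_cases i' j' k' (k - j + 1 - c)
        omega
      · have rf : btFun 0 c n (k - j + 1 + (n - c)) = k - j + 1 := by
          unfold btFun; split_ifs <;> omega
        have ef := H (k - j + 1 + (n - c)) (by omega) (by omega)
        rw [rf, bf] at ef
        have df := btFun_cases i' j' k' (k - j + 1 + (n - c))
        omega
  · -- i > 0 : point 1 + (n-c), image 1, value 1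
    have ra : btFun 0 c n (1 + (n - c)) = 1 := by unfold btFun; split_ifs <;> omega
    have ea := H (1 + (n - c)) (by omega) (by omega)
    rw [ra] at ea
    have ba : btFun i j k 1 = 1 := by unfold btFun; split_ifs <;> omega
    rw [ba] at ea
    have da := btFun_cases i' j' k' (1 + (n - c))
    have G1 : k' - j' = n - c ∧ k' - j' + i' < 1 + (n - c) ∧ 1 + (n - c) ≤ k' := by omega
    rcases eq_or_lt_of_le hkn with hk | hk
    · -- CASE B : k = n, i > 0; show c = n + i - j
      have rb : btFun 0 c n (n - c) = n := by unfold btFun; split_ifs <;> omega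
      have eb := H (n - c) (by omega) (by omega)
      rw [rb] at eb
      have bb : btFun i j k n = j := by unfold btFun; split_ifs <;> omega
      rw [bb] at eb
      have db := btFun_cases i' j' k' (n - c)
      have G2 : i' = 0 ∧ j' + (n - c) = j ∧ k' = j := by omega
      have be : btFun i j k (i + 1) = j + 1 := by unfold btFun; split_ifs <;> omega
      rcases le_or_gt (i + 1) c with hic | hic
      · have re : btFun 0 c n (i + 1 + (n - c)) = i + 1 := by
          unfold btFun; split_ifs <;> omega
        have ee := H (i + 1 + (n - c)) (by omega) (by omega)
        rw [re, be] at ee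
        have de := btFun_cases i' j' k' (i + 1 + (n - c))
        omega
      · have re : btFun 0 c n (i + 1 - c) = i + 1 := by
          unfold btFun; split_ifs <;> omega
        have ee := H (i + 1 - c) (by omega) (by omega)
        rw [re, be] at ee
        have de := btFun_cases i' j' k' (i + 1 - c)
        omega
    · -- CASE D : i > 0, k < n; contradiction
      have rb : btFun 0 c n (n - c) = n := by unfold btFun; split_ifs <;> omega
      have eb := H (n - c) (by omega) (by omega)
      rw [rb] at eb
      have bb : btFun i j k n = n := by unfold btFun; split_ifs <;> omega
      rw [bb] at eb
      have db := btFun_cases i' j' k' (n - c)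
      have G2 : i' = 0 ∧ j' = c ∧ k' = n := by omega
      have be : btFun i j k (i + 1) = j + 1 := by unfold btFun; split_ifs <;> omega
      rcases le_or_gt (i + 1) c with hic | hic
      · have re : btFun 0 c n (i + 1 + (n - c)) = i + 1 := by
          unfold btFun; split_ifs <;> omega
        have ee := H (i + 1 + (n - c)) (by omega) (by omega)
        rw [re, be] at ee
        have de := btFun_cases i' j' k' (i + 1 + (n - c))
        omega
      · have re : btFun 0 c n (i + 1 - c) = i + 1 := by
          unfold btFun; split_ifs <;> omega
        have ee := H (i + 1 - c) (by omega) (by omega)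
        rw [re, be] at ee
        have de := btFun_cases i' j' k' (i + 1 - c)
        omega

theorem comp_apply_fun {n i j k i' j' k' c : ℕ}
    (hij : i < j) (hjk : j < k) (hkn : k ≤ n)
    (hij' : i' < j') (hjk' : j' < k') (hkn' : k' ≤ n)
    (hc1 : 0 < c) (hc2 : c < n)
    (E : blockT n i j k hij hjk hkn * blockT n 0 c n hc1 hc2 le_rfl
        = blockT n i' j' k' hij' hjk' hkn')
    (t : ℕ) (h1 : 1 ≤ t) (h2 : t ≤ n) :
    btFun i' j' k' t = btFun i j k (btFun 0 c n t) := by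
  have h0 := DFunLike.congr_fun E ⟨t - 1, by omega⟩
  rw [Equiv.Perm.mul_apply] at h0
  have hv := congrArg Fin.val h0
  have hr1 : 1 ≤ btFun 0 c n t := btFun_lb (by omega)
  have hv' : btFun i j k (btFun 0 c n (t - 1 + 1) - 1 + 1) - 1
      = btFun i' j' k' (t - 1 + 1) - 1 := hv
  rw [Nat.sub_add_cancel h1] at hv'
  rw [Nat.sub_add_cancel hr1] at hv'
  have lb1 : 1 ≤ btFun i' j' k' t := btFun_lb (by omega)
  have lb2 : 1 ≤ btFun i j k (btFun 0 c n t) := btFun_lb hr1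
  omega

theorem two_shifts {n p q r x y : ℕ} (hpq : p < q) (hqr : q < r) (hrn : r ≤ n)
    (hx1 : 0 < x) (hx2 : x < n) (hy1 : 0 < y) (hy2 : y < n) (hxy : x ≠ y)
    (hmx : blockT n p q r hpq hqr hrn * blockT n 0 x n hx1 hx2 le_rfl
        ∈ blockTranspositions n)
    (hmy : blockT n p q r hpq hqr hrn * blockT n 0 y n hy1 hy2 le_rfl
        ∈ blockTranspositions n) :
    p = 0 ∧ r = n := by
  obtain ⟨i1, j1, k1, h1, h2, h3, hE1⟩ := hmx
  obtain ⟨i2, j2, k2, g1, g2, g3, hE2⟩ := hmy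
  have D1 := main_lemma hpq hqr hrn h1 h2 h3 hx1 hx2
    (fun t a b => comp_apply_fun hpq hqr hrn h1 h2 h3 hx1 hx2 hE1.symm t a b)
  have D2 := main_lemma hpq hqr hrn g1 g2 g3 hy1 hy2
    (fun t a b => comp_apply_fun hpq hqr hrn g1 g2 g3 hy1 hy2 hE2.symm t a b)
  omega

theorem rot_mul {n x y z : ℕ} (hx1 : 0 < x) (hx2 : x < n) (hy1 : 0 < y) (hy2 : y < n)
    (hz1 : 0 < z) (hz2 : z < n) {hkx hky hkz : n ≤ n}
    (hxyz : x + y = z ∨ x + y = n + z) :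
    blockT n 0 y n hy1 hy2 hky * blockT n 0 x n hx1 hx2 hkx
      = blockT n 0 z n hz1 hz2 hkz := by
  apply Equiv.ext
  intro t
  rw [Equiv.Perm.mul_apply]
  apply Fin.ext
  show btFun 0 y n (btFun 0 x n (t.val + 1) - 1 + 1) - 1 = btFun 0 z n (t.val + 1) - 1
  have hb : 1 ≤ btFun 0 x n (t.val + 1) := btFun_lb (by omega)
  rw [Nat.sub_add_cancel hb]
  have ht := t.isLt
  unfold btFun
  split_ifs <;> omega

theorem rot_mul_cancel {n x y : ℕ} (hx1 : 0 < x) (hx2 : x < n) (hy1 : 0 < y)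
    (hy2 : y < n) {hkx hky : n ≤ n} (h : x + y = n) :
    blockT n 0 y n hy1 hy2 hky * blockT n 0 x n hx1 hx2 hkx = 1 := by
  apply Equiv.ext
  intro t
  rw [Equiv.Perm.mul_apply]
  apply Fin.ext
  show btFun 0 y n (btFun 0 x n (t.val + 1) - 1 + 1) - 1 = t.val
  have hb : 1 ≤ btFun 0 x n (t.val + 1) := btFun_lb (by omega)
  rw [Nat.sub_add_cancel hb]
  have ht := t.isLt
  unfold btFun
  split_ifs <;> omega

theorem one_notin_T (n : ℕ) : (1 : Equiv.Perm (Fin n)) ∉ blockTranspositions n := by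
  rintro ⟨i, j, k, hij, hjk, hkn, hE⟩
  have h0 := congrArg Fin.val (DFunLike.congr_fun hE ⟨i, by omega⟩)
  have h1 : btFun i j k (i + 1) - 1 = i := h0
  have h2 : btFun i j k (i + 1) = j + 1 := by unfold btFun; split_ifs <;> omega
  omega

theorem rot_apply0 {n x : ℕ} (hx1 : 0 < x) (hx2 : x < n) (hk : n ≤ n)
    (t : Fin n) (ht : t.val = 0) :
    ((blockT n 0 x n hx1 hx2 hk) t).val = x := by
  show btFun 0 x n (t.val + 1) - 1 = x
  rw [ht]
  unfold btFun
  split_ifs <;> omega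

theorem B_subset_T (n : ℕ) : Bset n ⊆ blockTranspositions n := by
  rintro π ⟨x, h1, h2, hE⟩
  exact ⟨0, x, n, h1, h2, le_rfl, hE⟩

theorem B_clique (n : ℕ) (hn : 2 ≤ n) : (cayleyT n).IsClique (Bset n) := by
  rw [SimpleGraph.isClique_iff]
  rintro a ⟨x, hx1, hx2, hax⟩ b ⟨y, hy1, hy2, hby⟩ hab
  refine ⟨hab, ?_⟩
  have hxy : x ≠ y := by
    rintro rfl
    exact hab (by rw [← hax, ← hby])
  obtain ⟨z, hz1, hz2, hz⟩ : ∃ z, 0 < z ∧ z < n ∧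
      (y + (n - x + 0) = z ∨ y + (n - x + 0) = n + z) := by
    refine ⟨if n - x + y < n then n - x + y else n - x + y - n, ?_, ?_, ?_⟩ <;>
      split_ifs <;> omega
  refine ⟨0, z, n, hz1, hz2, le_rfl, ?_⟩
  rw [← hax, ← hby, blockT_inv hx1 hx2 le_rfl]
  exact (rot_mul hy1 hy2 (by omega) (by omega) hz1 hz2 hz).symm

theorem clique_sub_B {n : ℕ} (hn : 4 ≤ n) (s : Set (Equiv.Perm (Fin n)))
    (hsT : s ⊆ blockTranspositions n) (hcl : (cayleyT n).IsClique s)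
    (hex : ∃ a ∈ s ∩ Bset n, ∃ b ∈ s ∩ Bset n, a ≠ b) : s ⊆ Bset n := by
  obtain ⟨a, ⟨haS, haB⟩, b, ⟨hbS, hbB⟩, hab⟩ := hex
  intro σ hσ
  by_cases hσa : σ = a
  · exact hσa ▸ haB
  by_cases hσb : σ = b
  · exact hσb ▸ hbB
  obtain ⟨x, hx1, hx2, hax⟩ := haB
  obtain ⟨y, hy1, hy2, hby⟩ := hbB
  have hxy : x ≠ y := by
    rintro rfl
    exact hab (by rw [← hax, ← hby])
  have adjA : σ ≠ a ∧ σ⁻¹ * a ∈ blockTranspositions n := hcl hσ haS hσa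
  have adjB : σ ≠ b ∧ σ⁻¹ * b ∈ blockTranspositions n := hcl hσ hbS hσb
  obtain ⟨p, q, r, hpq, hqr, hrn, hτE⟩ := adjA.2
  have P1 : 0 < n - x + 0 := by omega
  have P2 : n - x + 0 < n := by omega
  have hσinv : σ⁻¹ = blockT n p q r hpq hqr hrn
      * blockT n 0 (n - x + 0) n P1 P2 le_rfl := by
    rw [hτE, ← blockT_inv hx1 hx2 le_rfl, hax]
    exact (mul_inv_cancel_right σ⁻¹ a).symm
  have hσinvT := blockTranspositions_inv_mem (hsT hσ)
  obtain ⟨z, hz1, hz2, hzs⟩ : ∃ z, 0 < z ∧ z < n ∧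
      (y + (n - x + 0) = z ∨ y + (n - x + 0) = n + z) := by
    refine ⟨if n - x + y < n then n - x + y else n - x + y - n, ?_, ?_, ?_⟩ <;>
      split_ifs <;> omega
  have hbz : blockT n 0 (n - x + 0) n P1 P2 le_rfl * blockT n 0 y n hy1 hy2 le_rfl
      = blockT n 0 z n hz1 hz2 le_rfl := rot_mul hy1 hy2 P1 P2 hz1 hz2 hzs
  have hυE : σ⁻¹ * b = blockT n p q r hpq hqr hrn
      * blockT n 0 z n hz1 hz2 le_rfl := by
    rw [← hbz, ← mul_assoc, ← hσinv, hby]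
  have hm1 : blockT n p q r hpq hqr hrn * blockT n 0 (n - x + 0) n P1 P2 le_rfl
      ∈ blockTranspositions n := hσinv ▸ hσinvT
  have hm2 : blockT n p q r hpq hqr hrn * blockT n 0 z n hz1 hz2 le_rfl
      ∈ blockTranspositions n := hυE ▸ adjB.2
  have hnz : n - x + 0 ≠ z := by omega
  obtain ⟨hp0, hrn'⟩ := two_shifts hpq hqr hrn P1 P2 hz1 hz2 hnz hm1 hm2
  subst hp0
  have hr : n = r := hrn'.symm
  subst hr
  by_cases hq : (n - x + 0) + q = n
  · have h1 : σ⁻¹ = 1 := by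
      rw [hσinv]
      exact rot_mul_cancel P1 P2 hpq hqr hq
    have h2 : σ = 1 := by rwa [inv_eq_one] at h1
    exact absurd (h2 ▸ hsT hσ) (one_notin_T n)
  · obtain ⟨w, hw1, hw2, hws⟩ : ∃ w, 0 < w ∧ w < n ∧
        ((n - x + 0) + q = w ∨ (n - x + 0) + q = n + w) := by
      refine ⟨if n - x + 0 + q < n then n - x + 0 + q else n - x + 0 + q - n,
        ?_, ?_, ?_⟩ <;> split_ifs <;> omega
    have hσw : σ⁻¹ = blockT n 0 w n hw1 hw2 le_rfl := by
      rw [hσinv]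
      exact rot_mul P1 P2 hpq hqr hw1 hw2 hws
    have hσval : σ = (blockT n 0 w n hw1 hw2 le_rfl)⁻¹ := by
      rw [← hσw, inv_inv]
    rw [blockT_inv hw1 hw2 le_rfl] at hσval
    exact ⟨n - w + 0, by omega, by omega, hσval.symm⟩

theorem B_ncard {n : ℕ} (hn : 2 ≤ n) : (Bset n).ncard = n - 1 := by
  have himg : Bset n = (fun x : ℕ =>
      if h : 0 < x ∧ x < n then blockT n 0 x n h.1 h.2 le_rfl else 1) '' Set.Ioo 0 n := by
    ext π
    constructor
    · rintro ⟨x, h1, h2, hE⟩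
      refine ⟨x, ⟨h1, h2⟩, ?_⟩
      show (if h : 0 < x ∧ x < n then blockT n 0 x n h.1 h.2 le_rfl else 1) = π
      rw [dif_pos (⟨h1, h2⟩ : 0 < x ∧ x < n)]
      exact hE
    · rintro ⟨x, hmem, hE⟩
      have hx : 0 < x ∧ x < n := hmem
      have hE' : (if h : 0 < x ∧ x < n then blockT n 0 x n h.1 h.2 le_rfl else 1) = π := hE
      rw [dif_pos hx] at hE'
      have hE := hE'
      exact ⟨x, hx.1, hx.2, hE⟩
  rw [himg]
  have hinj : Set.InjOn (fun x : ℕ =>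
      if h : 0 < x ∧ x < n then blockT n 0 x n h.1 h.2 le_rfl else 1) (Set.Ioo 0 n) := by
    intro x hx y hy hE
    have hx' : 0 < x ∧ x < n := hx
    have hy' : 0 < y ∧ y < n := hy
    simp only [dif_pos hx', dif_pos hy'] at hE
    obtain ⟨t0, ht0⟩ : ∃ t : Fin n, t.val = 0 := ⟨⟨0, by omega⟩, rfl⟩
    have e0 := congrArg Fin.val (DFunLike.congr_fun hE t0)
    have e1 := rot_apply0 hx'.1 hx'.2 le_rfl t0 ht0
    have e2 := rot_apply0 hy'.1 hy'.2 le_rfl t0 ht0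
    omega
  rw [Set.ncard_image_of_injOn hinj, Set.ncard_eq_toFinset_card']
  simp

/-- For `n ≥ 4`: every clique of `Γ` containing at least two
distinct elements of `B` is contained in `B`; consequently `B` is the unique maximal
clique of `Γ` of size `n-1` containing an edge with both endpoints in `B`. -/
theorem stmt_13 (n : ℕ) (hn : 4 ≤ n) :
    (∀ s : Set (Equiv.Perm (Fin n)), s ⊆ blockTranspositions n →
      (cayleyT n).IsClique s →
      (∃ a ∈ s ∩ Bset n, ∃ b ∈ s ∩ Bset n, a ≠ b) → s ⊆ Bset n) ∧
    ((cayleyT n).IsClique (Bset n) ∧ (Bset n).ncard = n - 1 ∧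
      (∀ t : Set (Equiv.Perm (Fin n)), Bset n ⊆ t → t ⊆ blockTranspositions n →
        (cayleyT n).IsClique t → t = Bset n) ∧
      (∀ s : Set (Equiv.Perm (Fin n)), s ⊆ blockTranspositions n →
        (cayleyT n).IsClique s → s.ncard = n - 1 →
        (∀ t, s ⊆ t → t ⊆ blockTranspositions n → (cayleyT n).IsClique t → t = s) →
        (∃ a ∈ s ∩ Bset n, ∃ b ∈ s ∩ Bset n, a ≠ b) → s = Bset n)) := by
  have hρ1 : blockT n 0 1 n (by omega) (by omega) le_rfl ∈ Bset n :=
    ⟨1, by omega, by omega, rfl⟩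
  have hρ2 : blockT n 0 2 n (by omega) (by omega) le_rfl ∈ Bset n :=
    ⟨2, by omega, by omega, rfl⟩
  have hne : blockT n 0 1 n (by omega) (by omega) le_rfl
      ≠ blockT n 0 2 n (by omega) (by omega) le_rfl := by
    intro hE
    obtain ⟨t0, ht0⟩ : ∃ t : Fin n, t.val = 0 := ⟨⟨0, by omega⟩, rfl⟩
    have e0 := congrArg Fin.val (DFunLike.congr_fun hE t0)
    have e1 := rot_apply0 (x := 1) (by omega) (by omega) le_rfl t0 ht0
    have e2 := rot_apply0 (x := 2) (by omega) (by omega) le_rfl t0 ht0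
    omega
  refine ⟨fun s hsT hcl hex => clique_sub_B hn s hsT hcl hex,
    B_clique n (by omega), B_ncard (by omega), ?_, ?_⟩
  · intro t hBt htT hclt
    have h2 : t ⊆ Bset n := clique_sub_B hn t htT hclt
      ⟨_, ⟨hBt hρ1, hρ1⟩, _, ⟨hBt hρ2, hρ2⟩, hne⟩
    exact Set.Subset.antisymm h2 hBt
  · intro s hsT hcl _hcard hmax hex
    exact (hmax (Bset n) (clique_sub_B hn s hsT hcl hex) (B_subset_T n)
      (B_clique n (by omega))).symm
end

section
/- Let n ≥ 5. The block transposition graph Γ is 2(n-2)-regular: every vertex of Γ has exactly 2(n-2) neighbors in Γ. -/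
section Aux

lemma btc {i j k : ℕ} (hij : i < j) (hjk : j < k) (t : ℕ) :
    ((t ≤ i ∨ k < t) ∧ btFun i j k t = t) ∨
    (i < t ∧ t + j ≤ k + i ∧ btFun i j k t + i = t + j) ∨
    (k + i < t + j ∧ t ≤ k ∧ btFun i j k t + k = t + j) := by
  unfold btFun; split_ifs <;> omega

lemma btc2 {i j k : ℕ} (hij : i < j) (hjk : j < k) (t : ℕ) :
    ((t ≤ i ∨ k < t) ∧ btFun i j k t = t) ∨
    (i < t ∧ t + j ≤ k + i ∧ btFun i j k t = t + j - i) ∨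
    (k + i < t + j ∧ t ≤ k ∧ btFun i j k t = t + j - k) := by
  unfold btFun; split_ifs <;> omega

lemma btv {i j k : ℕ} (hij : i < j) (hjk : j < k) :
    btFun i j k i = i ∧ btFun i j k (i+1) = j+1 ∧ btFun i j k (k-j+i) = k ∧
    btFun i j k (k-j+i+1) = i+1 ∧ btFun i j k k = j ∧ btFun i j k (k+1) = k+1 := by
  unfold btFun; refine ⟨?_,?_,?_,?_,?_,?_⟩ <;> (split_ifs <;> omega)

lemma btnb {i j k : ℕ} (hij : i < j) (hjk : j < k) {t : ℕ}
    (h1 : t ≠ i) (h2 : t ≠ k-j+i) (h3 : t ≠ k) :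
    btFun i j k (t+1) = btFun i j k t + 1 := by
  unfold btFun; split_ifs <;> omega

lemma blockT_apply_val {n i j k : ℕ} (h1 : i < j) (h2 : j < k) (h3 : k ≤ n) (x : Fin n) :
    ((blockT n i j k h1 h2 h3) x).val = btFun i j k (x.val + 1) - 1 := rfl

lemma blockT_ne_one {n i j k : ℕ} (h1 : i < j) (h2 : j < k) (h3 : k ≤ n) :
    blockT n i j k h1 h2 h3 ≠ 1 := by
  intro h
  have := congrArg (fun π : Equiv.Perm (Fin n) => (π ⟨i, by omega⟩).val) h
  simp only [blockT_apply_val, Equiv.Perm.one_apply] at this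
  obtain ⟨_, s2, _⟩ := btv h1 h2
  omega

lemma mul_btFun {n i1 j1 k1 i2 j2 k2 i3 j3 k3 : ℕ}
    {p1 : i1 < j1} {p2 : j1 < k1} {p3 : k1 ≤ n}
    {q1 : i2 < j2} {q2 : j2 < k2} {q3 : k2 ≤ n}
    {r1 : i3 < j3} {r2 : j3 < k3} {r3 : k3 ≤ n}
    (heq : blockT n i1 j1 k1 p1 p2 p3 * blockT n i2 j2 k2 q1 q2 q3
      = blockT n i3 j3 k3 r1 r2 r3) :
    ∀ t, btFun i1 j1 k1 (btFun i2 j2 k2 t) = btFun i3 j3 k3 t := by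
  intro t
  rcases Nat.eq_zero_or_pos t with rfl | ht
  · have h0 : btFun i2 j2 k2 0 = 0 := by unfold btFun; split_ifs <;> omega
    rw [h0]; unfold btFun; split_ifs <;> omega
  rcases le_or_gt t n with htn | htn
  · have hcong := congrArg (fun π : Equiv.Perm (Fin n) => (π ⟨t - 1, by omega⟩).val) heq
    simp only [Equiv.Perm.mul_apply, blockT_apply_val] at hcong
    have ht' : t - 1 + 1 = t := by omega
    rw [ht'] at hcong
    have l2 : 1 ≤ btFun i2 j2 k2 t := btFun_lb (by omega)
    have l2' : btFun i2 j2 k2 t - 1 + 1 = btFun i2 j2 k2 t := by omega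
    rw [l2'] at hcong
    have l1 : 1 ≤ btFun i1 j1 k1 (btFun i2 j2 k2 t) := btFun_lb l2
    have l3 : 1 ≤ btFun i3 j3 k3 t := btFun_lb (by omega)
    omega
  · have h0 : btFun i2 j2 k2 t = t := by unfold btFun; split_ifs <;> omega
    rw [h0]; unfold btFun; split_ifs <;> omega

lemma btFun_mul {n i1 j1 k1 i2 j2 k2 i3 j3 k3 : ℕ}
    (p1 : i1 < j1) (p2 : j1 < k1) (p3 : k1 ≤ n)
    (q1 : i2 < j2) (q2 : j2 < k2) (q3 : k2 ≤ n)
    (r1 : i3 < j3) (r2 : j3 < k3) (r3 : k3 ≤ n)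
    (H : ∀ t, btFun i1 j1 k1 (btFun i2 j2 k2 t) = btFun i3 j3 k3 t) :
    blockT n i1 j1 k1 p1 p2 p3 * blockT n i2 j2 k2 q1 q2 q3
      = blockT n i3 j3 k3 r1 r2 r3 := by
  apply Equiv.ext; intro x
  apply Fin.ext
  simp only [Equiv.Perm.mul_apply, blockT_apply_val]
  have l2 : 1 ≤ btFun i2 j2 k2 (x.val + 1) := btFun_lb (by omega)
  have l2' : btFun i2 j2 k2 (x.val + 1) - 1 + 1 = btFun i2 j2 k2 (x.val + 1) := by omega
  rw [l2', H]

lemma blockT_triple_inj {n i j k d e f : ℕ}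
    {h1 : i < j} {h2 : j < k} {h3 : k ≤ n}
    {h4 : d < e} {h5 : e < f} {h6 : f ≤ n}
    (heq : blockT n i j k h1 h2 h3 = blockT n d e f h4 h5 h6) :
    i = d ∧ j = e ∧ k = f := by
  have H : ∀ t, btFun i j k t = btFun d e f t := by
    intro t
    rcases Nat.eq_zero_or_pos t with rfl | ht
    · unfold btFun; split_ifs <;> omega
    rcases le_or_gt t n with htn | htn
    · have hcong := congrArg (fun π : Equiv.Perm (Fin n) => (π ⟨t - 1, by omega⟩).val) heq
      simp only [blockT_apply_val] at hcong
      have ht' : t - 1 + 1 = t := by omega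
      rw [ht'] at hcong
      have l1 : 1 ≤ btFun i j k t := btFun_lb (by omega)
      have l3 : 1 ≤ btFun d e f t := btFun_lb (by omega)
      omega
    · unfold btFun; split_ifs <;> omega
  obtain ⟨s1, s2, s3, s4, s5, s6⟩ := btv h1 h2
  obtain ⟨t1, t2, t3, t4, t5, t6⟩ := btv h4 h5
  have e1 := H (i+1); rw [s2] at e1
  have e2 := H (d+1); rw [t2] at e2
  have e3 := H k; rw [s5] at e3
  have e4 := H f; rw [t5] at e4
  have c1 := btc h4 h5 (i+1)
  have c2 := btc h1 h2 (d+1)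
  have c3 := btc h4 h5 k
  have c4 := btc h1 h2 f
  rcases c1 with x1|x1|x1 <;> rcases c2 with x2|x2|x2 <;> rcases c3 with x3|x3|x3 <;>
    rcases c4 with x4|x4|x4 <;> omega

end Aux

def btp (n : ℕ) (x : ℕ × ℕ × ℕ) : Equiv.Perm (Fin n) :=
  if h : x.1 < x.2.1 ∧ x.2.1 < x.2.2 ∧ x.2.2 ≤ n then
    blockT n x.1 x.2.1 x.2.2 h.1 h.2.1 h.2.2 else 1

def famG (n i j k : ℕ) : Finset (ℕ × ℕ × ℕ) :=
  ((Finset.range (k-j+i)).erase i).image (fun a => (a, k-j+i, k)) ∪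
  ((Finset.Ioo i k).erase (k-j+i)).image (fun b => (i, b, k)) ∪
  ((Finset.Ioc (k-j+i) n).erase k).image (fun c => (i, k-j+i, c)) ∪
  (Finset.range i).image (fun a => (a, i, k-j+i)) ∪
  (Finset.Ioc k n).image (fun c => (k-j+i, k, c))

lemma mem_famG {n i j k : ℕ} (x : ℕ × ℕ × ℕ) :
    x ∈ famG n i j k ↔
      (∃ a, (a ≠ i ∧ a < k-j+i) ∧ (a, k-j+i, k) = x) ∨
      (∃ b, (b ≠ k-j+i ∧ i < b ∧ b < k) ∧ (i, b, k) = x) ∨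
      (∃ c, (c ≠ k ∧ k-j+i < c ∧ c ≤ n) ∧ (i, k-j+i, c) = x) ∨
      (∃ a, a < i ∧ (a, i, k-j+i) = x) ∨
      (∃ c, (k < c ∧ c ≤ n) ∧ (k-j+i, k, c) = x) := by
  simp [famG, Finset.mem_union, Finset.mem_image, Finset.mem_erase, Finset.mem_range,
    Finset.mem_Ioo, Finset.mem_Ioc, or_assoc, and_assoc]

lemma famG_valid {n i j k : ℕ} (hij : i < j) (hjk : j < k) (hkn : k ≤ n)
    {x : ℕ × ℕ × ℕ} (hx : x ∈ famG n i j k) :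
    x.1 < x.2.1 ∧ x.2.1 < x.2.2 ∧ x.2.2 ≤ n := by
  rw [mem_famG] at hx
  rcases hx with ⟨a, ha, rfl⟩ | ⟨b, hb, rfl⟩ | ⟨c, hc, rfl⟩ | ⟨a, ha, rfl⟩ | ⟨c, hc, rfl⟩ <;>
    simp <;> omega

lemma card_famG {n i j k : ℕ} (hij : i < j) (hjk : j < k) (hkn : k ≤ n) :
    (famG n i j k).card = 2 * (n - 2) := by
  have inj1 : Function.Injective (fun a : ℕ => (a, k-j+i, k)) := by
    intro x y h; simpa using h
  have inj2 : Function.Injective (fun b : ℕ => (i, b, k)) := by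
    intro x y h; simpa using h
  have inj3 : Function.Injective (fun c : ℕ => (i, k-j+i, c)) := by
    intro x y h; simpa using h
  have inj4 : Function.Injective (fun a : ℕ => (a, i, k-j+i)) := by
    intro x y h; simpa using h
  have inj5 : Function.Injective (fun c : ℕ => (k-j+i, k, c)) := by
    intro x y h; simpa using h
  have hd : ∀ y ∈ ((Finset.range (k-j+i)).erase i).image (fun a => (a, k-j+i, k)) ∪
      ((Finset.Ioo i k).erase (k-j+i)).image (fun b => (i, b, k)) ∪
      ((Finset.Ioc (k-j+i) n).erase k).image (fun c => (i, k-j+i, c)) ∪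
      (Finset.range i).image (fun a => (a, i, k-j+i)),
      y ∉ (Finset.Ioc k n).image (fun c : ℕ => (k-j+i, k, c)) := by
    simp only [Finset.mem_union, Finset.mem_image, Finset.mem_erase, Finset.mem_range,
      Finset.mem_Ioo, Finset.mem_Ioc]
    rintro y (((⟨a, ha, rfl⟩ | ⟨b, hb, rfl⟩) | ⟨c, hc, rfl⟩) | ⟨a, ha, rfl⟩) ⟨c', hc', h⟩ <;>
      · simp [Prod.ext_iff] at h; omega
  have hd2 : ∀ y ∈ ((Finset.range (k-j+i)).erase i).image (fun a => (a, k-j+i, k)) ∪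
      ((Finset.Ioo i k).erase (k-j+i)).image (fun b => (i, b, k)) ∪
      ((Finset.Ioc (k-j+i) n).erase k).image (fun c => (i, k-j+i, c)),
      y ∉ (Finset.range i).image (fun a : ℕ => (a, i, k-j+i)) := by
    simp only [Finset.mem_union, Finset.mem_image, Finset.mem_erase, Finset.mem_range,
      Finset.mem_Ioo, Finset.mem_Ioc]
    rintro y ((⟨a, ha, rfl⟩ | ⟨b, hb, rfl⟩) | ⟨c, hc, rfl⟩) ⟨a', ha', h⟩ <;>
      · simp [Prod.ext_iff] at h; omega
  have hd3 : ∀ y ∈ ((Finset.range (k-j+i)).erase i).image (fun a => (a, k-j+i, k)) ∪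
      ((Finset.Ioo i k).erase (k-j+i)).image (fun b => (i, b, k)),
      y ∉ ((Finset.Ioc (k-j+i) n).erase k).image (fun c : ℕ => (i, k-j+i, c)) := by
    simp only [Finset.mem_union, Finset.mem_image, Finset.mem_erase, Finset.mem_range,
      Finset.mem_Ioo, Finset.mem_Ioc]
    rintro y (⟨a, ha, rfl⟩ | ⟨b, hb, rfl⟩) ⟨c', hc', h⟩ <;>
      · simp [Prod.ext_iff] at h; omega
  have hd4 : ∀ y ∈ ((Finset.range (k-j+i)).erase i).image (fun a => (a, k-j+i, k)),
      y ∉ ((Finset.Ioo i k).erase (k-j+i)).image (fun b : ℕ => (i, b, k)) := by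
    simp only [Finset.mem_image, Finset.mem_erase, Finset.mem_range, Finset.mem_Ioo]
    rintro y ⟨a, ha, rfl⟩ ⟨b', hb', h⟩
    simp [Prod.ext_iff] at h; omega
  unfold famG
  rw [Finset.card_union_of_disjoint (Finset.disjoint_left.mpr (by exact fun {y} hy => hd y hy)),
    Finset.card_union_of_disjoint (Finset.disjoint_left.mpr (by exact fun {y} hy => hd2 y hy)),
    Finset.card_union_of_disjoint (Finset.disjoint_left.mpr (by exact fun {y} hy => hd3 y hy)),
    Finset.card_union_of_disjoint (Finset.disjoint_left.mpr (by exact fun {y} hy => hd4 y hy)),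
    Finset.card_image_of_injective _ inj1, Finset.card_image_of_injective _ inj2,
    Finset.card_image_of_injective _ inj3, Finset.card_image_of_injective _ inj4,
    Finset.card_image_of_injective _ inj5,
    Finset.card_erase_of_mem (by simp; omega),
    Finset.card_erase_of_mem (by simp [Finset.mem_Ioo]; omega),
    Finset.card_erase_of_mem (by simp [Finset.mem_Ioc]; omega),
    Finset.card_range, Finset.card_range, Nat.card_Ioo, Nat.card_Ioc, Nat.card_Ioc]
  omega

section Sound

variable {i j k a b c t : ℕ}

lemma soundG1a (hij : i < j) (hjk : j < k) (hai : a < i) (t : ℕ) :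
    btFun i j k (btFun a (k-j+i) k t) = btFun a i j t := by
  rcases btc2 (show a < k-j+i by omega) (show k-j+i < k by omega) t with
    ⟨h,e⟩|⟨h,h2,e⟩|⟨h,h2,e⟩ <;> rw [e] <;> (unfold btFun; split_ifs <;> omega)

lemma soundG1b (hij : i < j) (hjk : j < k) (hia : i < a) (ham : a < k-j+i) (t : ℕ) :
    btFun i j k (btFun a (k-j+i) k t) = btFun i j (a+j-i) t := by
  rcases btc2 (show a < k-j+i by omega) (show k-j+i < k by omega) t with
    ⟨h,e⟩|⟨h,h2,e⟩|⟨h,h2,e⟩ <;> rw [e] <;> (unfold btFun; split_ifs <;> omega)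

lemma soundG2a (hij : i < j) (hjk : j < k) (hib : i < b) (hbm : b < k-j+i) (t : ℕ) :
    btFun i j k (btFun i b k t) = btFun i (b+j-i) k t := by
  rcases btc2 (show i < b by omega) (show b < k by omega) t with
    ⟨h,e⟩|⟨h,h2,e⟩|⟨h,h2,e⟩ <;> rw [e] <;> (unfold btFun; split_ifs <;> omega)

lemma soundG2b (hij : i < j) (hjk : j < k) (hmb : k-j+i < b) (hbk : b < k) (t : ℕ) :
    btFun i j k (btFun i b k t) = btFun i (b+j-k) k t := by
  rcases btc2 (show i < b by omega) (show b < k by omega) t with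
    ⟨h,e⟩|⟨h,h2,e⟩|⟨h,h2,e⟩ <;> rw [e] <;> (unfold btFun; split_ifs <;> omega)

lemma soundG3a (hij : i < j) (hjk : j < k) (hmc : k-j+i < c) (hck : c < k) (t : ℕ) :
    btFun i j k (btFun i (k-j+i) c t) = btFun (c+j-k) j k t := by
  rcases btc2 (show i < k-j+i by omega) (show k-j+i < c by omega) t with
    ⟨h,e⟩|⟨h,h2,e⟩|⟨h,h2,e⟩ <;> rw [e] <;> (unfold btFun; split_ifs <;> omega)

lemma soundG3b (hij : i < j) (hjk : j < k) (hkc : k < c) (t : ℕ) :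
    btFun i j k (btFun i (k-j+i) c t) = btFun j k c t := by
  rcases btc2 (show i < k-j+i by omega) (show k-j+i < c by omega) t with
    ⟨h,e⟩|⟨h,h2,e⟩|⟨h,h2,e⟩ <;> rw [e] <;> (unfold btFun; split_ifs <;> omega)

lemma soundG4 (hij : i < j) (hjk : j < k) (hai : a < i) (t : ℕ) :
    btFun i j k (btFun a i (k-j+i) t) = btFun a j k t := by
  rcases btc2 (show a < i by omega) (show i < k-j+i by omega) t with
    ⟨h,e⟩|⟨h,h2,e⟩|⟨h,h2,e⟩ <;> rw [e] <;> (unfold btFun; split_ifs <;> omega)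

lemma soundG5 (hij : i < j) (hjk : j < k) (hkc : k < c) (t : ℕ) :
    btFun i j k (btFun (k-j+i) k c t) = btFun i j c t := by
  rcases btc2 (show k-j+i < k by omega) (show k < c by omega) t with
    ⟨h,e⟩|⟨h,h2,e⟩|⟨h,h2,e⟩ <;> rw [e] <;> (unfold btFun; split_ifs <;> omega)

end Sound

set_option maxHeartbeats 2000000 in
theorem key {i j k a b c d e f : ℕ}
    (hij : i < j) (hjk : j < k) (hab : a < b) (hbc : b < c)
    (hde : d < e) (hef : e < f)
    (H : ∀ t, btFun i j k (btFun a b c t) = btFun d e f t) :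
    (b + j = k + i ∧ c = k) ∨ (a = i ∧ c = k) ∨ (a = i ∧ b + j = k + i) ∨
    (b = i ∧ c + j = k + i) ∨ (a + j = k + i ∧ b = k) := by
  obtain ⟨r1, r2, r3, r4, r5, r6⟩ := btv hab hbc
  by_cases hA : a ≠ d ∧ a ≠ f-e+d ∧ a ≠ f
  · have e1 : btFun d e f (a+1) = btFun d e f a + 1 := btnb hde hef hA.1 hA.2.1 hA.2.2
    have e2 := H a; have e3 := H (a+1)
    rw [r1] at e2; rw [r2] at e3
    have hsub : (a = i ∧ b + j = k + i) ∨ (a + j = k + i ∧ b = k) := by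
      have ca := btc hij hjk a
      have cb := btc hij hjk b
      have cb1 := btc hij hjk (b+1)
      rcases ca with h1|h1|h1 <;> rcases cb with h2|h2|h2 <;> rcases cb1 with h3|h3|h3 <;> omega
    omega
  by_cases hB : c-b+a ≠ d ∧ c-b+a ≠ f-e+d ∧ c-b+a ≠ f
  · have e1 : btFun d e f (c-b+a+1) = btFun d e f (c-b+a) + 1 := btnb hde hef hB.1 hB.2.1 hB.2.2
    have e2 := H (c-b+a); have e3 := H (c-b+a+1)
    rw [r3] at e2; rw [r4] at e3
    have hsub : a = i ∧ c = k := by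
      have ca := btc hij hjk a
      have ca1 := btc hij hjk (a+1)
      have cc := btc hij hjk c
      rcases ca with h1|h1|h1 <;> rcases ca1 with h2|h2|h2 <;> rcases cc with h3|h3|h3 <;> omega
    omega
  by_cases hC : c ≠ d ∧ c ≠ f-e+d ∧ c ≠ f
  · have e1 : btFun d e f (c+1) = btFun d e f c + 1 := btnb hde hef hC.1 hC.2.1 hC.2.2
    have e2 := H c; have e3 := H (c+1)
    rw [r5] at e2; rw [r6] at e3
    have hsub : (b = i ∧ c + j = k + i) ∨ (b + j = k + i ∧ c = k) := by
      have cb := btc hij hjk b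
      have cc := btc hij hjk c
      have cc1 := btc hij hjk (c+1)
      rcases cb with h1|h1|h1 <;> rcases cc with h2|h2|h2 <;> rcases cc1 with h3|h3|h3 <;> omega
    omega
  · exfalso
    have had : a = d ∧ c-b+a = f-e+d ∧ c = f := by omega
    obtain ⟨s1, s2, s3, s4, s5, s6⟩ := btv hij hjk
    obtain ⟨t1, t2, t3, t4, t5, t6⟩ := btv hde hef
    have main : ∀ v : ℕ, v = i ∨ v = k-j+i ∨ v = k → v = a ∨ v = b ∨ v = c := by
      intro v hv
      have hqv : btFun a b c (btFun a (c-b+a) c v) = v := btFun_inv' hab hbc v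
      set q := btFun a (c-b+a) c v with hq
      by_cases hmem : q ≠ a ∧ q ≠ c-b+a ∧ q ≠ c
      · exfalso
        have e1 : btFun a b c (q+1) = v + 1 := by
          rw [btnb hab hbc hmem.1 hmem.2.1 hmem.2.2, hqv]
        have e2 := H q; have e3 := H (q+1)
        rw [hqv] at e2; rw [e1] at e3
        have hnb : btFun d e f (q+1) = btFun d e f q + 1 := by
          refine btnb hde hef ?_ ?_ ?_ <;> omega
        rcases hv with rfl|rfl|rfl <;> omega
      · push_neg at hmem
        rcases Classical.em (q = a) with h|h
        · left; rw [← hqv, h, r1]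
        rcases Classical.em (q = c-b+a) with h'|h'
        · right; right; rw [← hqv, h', r3]
        · have h'' := hmem h h'
          right; left; rw [← hqv, h'', r5]
    have mi := main i (Or.inl rfl)
    have mm := main (k-j+i) (Or.inr (Or.inl rfl))
    have mk := main k (Or.inr (Or.inr rfl))
    have habc : a = i ∧ b = k-j+i ∧ c = k := by omega
    have e3 := H (a+1); rw [r2] at e3
    rw [habc.2.1] at e3
    rw [had.1] at e3
    omega

set_option maxHeartbeats 1000000 in
/-- For `n ≥ 5`, the block transposition graph `Γ` is
`2(n-2)`-regular. -/
theorem stmt_14 (n : ℕ) (hn : 5 ≤ n) :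
    ∀ σ ∈ blockTranspositions n,
      {τ | τ ∈ blockTranspositions n ∧ σ ≠ τ ∧
        σ⁻¹ * τ ∈ blockTranspositions n}.ncard = 2 * (n - 2) := by
  intro σ hσ
  obtain ⟨i, j, k, hij, hjk, hkn, rfl⟩ := hσ
  have himg : {τ | τ ∈ blockTranspositions n ∧ blockT n i j k hij hjk hkn ≠ τ ∧
      (blockT n i j k hij hjk hkn)⁻¹ * τ ∈ blockTranspositions n}
      = (fun x => blockT n i j k hij hjk hkn * btp n x) '' ↑(famG n i j k) := by
    ext τ
    simp only [Set.mem_setOf_eq, Set.mem_image, Finset.mem_coe]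
    constructor
    · rintro ⟨⟨d, e, f, hde, hef, hfn, rfl⟩, hne, hmem⟩
      obtain ⟨a, b, c, hab, hbc, hcn, hρ⟩ := hmem
      have hτ : blockT n i j k hij hjk hkn * blockT n a b c hab hbc hcn
          = blockT n d e f hde hef hfn := by
        rw [hρ, mul_inv_cancel_left]
      have H := mul_btFun hτ
      have hkey := key hij hjk hab hbc hde hef H
      have hne1 : ¬(a = i ∧ b = k-j+i ∧ c = k) := by
        rintro ⟨ha, hb, hc⟩
        have h1 : blockT n a b c hab hbc hcn = (blockT n i j k hij hjk hkn)⁻¹ := by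
          subst ha; subst hc; subst hb
          exact (blockT_inv hij hjk hkn).symm
        have h3 := h1.symm.trans hρ
        have h2 : (blockT n i j k hij hjk hkn)⁻¹ * 1
            = (blockT n i j k hij hjk hkn)⁻¹ * blockT n d e f hde hef hfn := by
          rw [mul_one]; exact h3
        exact blockT_ne_one hde hef hfn (mul_left_cancel h2).symm
      refine ⟨(a, b, c), ?_, ?_⟩
      · rw [mem_famG]
        rcases hkey with ⟨h1,h2⟩|⟨h1,h2⟩|⟨h1,h2⟩|⟨h1,h2⟩|⟨h1,h2⟩
        · exact Or.inl ⟨a, ⟨by omega, by omega⟩,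
            by rw [show k-j+i = b by omega, show k = c by omega]⟩
        · exact Or.inr (Or.inl ⟨b, ⟨by omega, by omega, by omega⟩,
            by rw [show i = a by omega, show k = c by omega]⟩)
        · exact Or.inr (Or.inr (Or.inl ⟨c, ⟨by omega, by omega, hcn⟩,
            by rw [show k-j+i = b by omega, show i = a by omega]⟩))
        · exact Or.inr (Or.inr (Or.inr (Or.inl ⟨a, by omega,
            by rw [show k-j+i = c by omega, show i = b by omega]⟩)))
        · exact Or.inr (Or.inr (Or.inr (Or.inr ⟨c, ⟨by omega, hcn⟩,
            by rw [show k-j+i = a by omega, show k = b by omega]⟩)))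
      · have hv : btp n (a, b, c) = blockT n a b c hab hbc hcn :=
          dif_pos ⟨hab, hbc, hcn⟩
        show blockT n i j k hij hjk hkn * btp n (a, b, c) = _
        rw [hv]; exact hτ
    · rintro ⟨x, hx, rfl⟩
      obtain ⟨hx1, hx2, hx3⟩ := famG_valid hij hjk hkn hx
      have hv : btp n x = blockT n x.1 x.2.1 x.2.2 hx1 hx2 hx3 :=
        dif_pos ⟨hx1, hx2, hx3⟩
      have hT : blockT n i j k hij hjk hkn * btp n x ∈ blockTranspositions n := by
        rw [mem_famG] at hx
        rcases hx with ⟨a, ⟨hai, ham⟩, rfl⟩ | ⟨b, ⟨hbm, hib, hbk⟩, rfl⟩ |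
          ⟨c, ⟨hck, hmc, hcn⟩, rfl⟩ | ⟨a, hai, rfl⟩ | ⟨c, ⟨hkc, hcn⟩, rfl⟩
        · rcases lt_or_gt_of_ne hai with h|h
          · refine ⟨a, i, j, by omega, by omega, by omega, ?_⟩
            rw [hv]
            exact (btFun_mul (by omega) (by omega) (by omega) (by omega) (by omega)
              (by omega) (by omega) (by omega) (by omega) (soundG1a hij hjk h)).symm
          · refine ⟨i, j, a+j-i, by omega, by omega, by omega, ?_⟩
            rw [hv]
            exact (btFun_mul (by omega) (by omega) (by omega) (by omega) (by omega)
              (by omega) (by omega) (by omega) (by omega) (soundG1b hij hjk h ham)).symm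
        · rcases lt_or_gt_of_ne hbm with h|h
          · refine ⟨i, b+j-i, k, by omega, by omega, by omega, ?_⟩
            rw [hv]
            exact (btFun_mul (by omega) (by omega) (by omega) (by omega) (by omega)
              (by omega) (by omega) (by omega) (by omega) (soundG2a hij hjk hib h)).symm
          · refine ⟨i, b+j-k, k, by omega, by omega, by omega, ?_⟩
            rw [hv]
            exact (btFun_mul (by omega) (by omega) (by omega) (by omega) (by omega)
              (by omega) (by omega) (by omega) (by omega) (soundG2b hij hjk h hbk)).symm
        · rcases lt_or_gt_of_ne hck with h|h
          · refine ⟨c+j-k, j, k, by omega, by omega, by omega, ?_⟩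
            rw [hv]
            exact (btFun_mul (by omega) (by omega) (by omega) (by omega) (by omega)
              (by omega) (by omega) (by omega) (by omega) (soundG3a hij hjk hmc h)).symm
          · refine ⟨j, k, c, by omega, by omega, by omega, ?_⟩
            rw [hv]
            exact (btFun_mul (by omega) (by omega) (by omega) (by omega) (by omega)
              (by omega) (by omega) (by omega) (by omega) (soundG3b hij hjk h)).symm
        · refine ⟨a, j, k, by omega, by omega, by omega, ?_⟩
          rw [hv]
          exact (btFun_mul (by omega) (by omega) (by omega) (by omega) (by omega)
            (by omega) (by omega) (by omega) (by omega) (soundG4 hij hjk hai)).symm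
        · refine ⟨i, j, c, by omega, by omega, by omega, ?_⟩
          rw [hv]
          exact (btFun_mul (by omega) (by omega) (by omega) (by omega) (by omega)
            (by omega) (by omega) (by omega) (by omega) (soundG5 hij hjk hkc)).symm
      refine ⟨hT, ?_, ?_⟩
      · intro hcontra
        have h2 : blockT n i j k hij hjk hkn * 1
            = blockT n i j k hij hjk hkn * btp n x := by
          rw [mul_one]; exact hcontra
        have h3 := (mul_left_cancel h2).symm
        rw [hv] at h3
        exact blockT_ne_one hx1 hx2 hx3 h3
      · rw [inv_mul_cancel_left, hv]
        exact ⟨x.1, x.2.1, x.2.2, hx1, hx2, hx3, rfl⟩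
  have hinj : Set.InjOn (fun x => blockT n i j k hij hjk hkn * btp n x)
      ↑(famG n i j k) := by
    intro x hx y hy hxy
    simp only [Finset.mem_coe] at hx hy
    obtain ⟨hx1, hx2, hx3⟩ := famG_valid hij hjk hkn hx
    obtain ⟨hy1, hy2, hy3⟩ := famG_valid hij hjk hkn hy
    have h1 : btp n x = btp n y := mul_left_cancel hxy
    have hbx : btp n x = blockT n x.1 x.2.1 x.2.2 hx1 hx2 hx3 :=
      dif_pos ⟨hx1, hx2, hx3⟩
    have hby : btp n y = blockT n y.1 y.2.1 y.2.2 hy1 hy2 hy3 :=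
      dif_pos ⟨hy1, hy2, hy3⟩
    rw [hbx, hby] at h1
    obtain ⟨e1, e2, e3⟩ := blockT_triple_inj h1
    obtain ⟨x1, x2, x3⟩ := x
    obtain ⟨y1, y2, y3⟩ := y
    simp only [Prod.mk.injEq] at *
    exact ⟨e1, e2, e3⟩
  rw [himg, Set.ncard_image_of_injOn hinj, Set.ncard_coe_finset,
    card_famG hij hjk hkn]
end
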